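/- Semantics preservation for the incremental-update translation (core case of the soundness theorem): for the single-statement loop 'for i in L do V[key(i)] ⊕= val(i)', starting from state V₀, the denotational semantics (sequential fold of update transformers) equals the translated bulk program V₀ ◁ G, where G is the finite map sending each k in the image key(L) to V₀(k) ⊕ (⊕-aggregate of val over the group of i ∈ L with key(i) = k). -/

import Mathlib

private lemma aux_fold {I K M : Type*} [DecidableEq K]
    [AddCommMonoid M] (key : I → K) (val : I → M) (L : List I) (V₀ : K → M) (k : K) :
    List.foldl (fun V i => Function.update V (key i) (V (key i) + val i)) V₀ L k =
      V₀ k + ((L.filter (fun i => decide (key i = k))).map val).sum := by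
  induction L generalizing V₀ with
  | nil => simp
  | cons a L ih =>
    simp only [List.foldl_cons, ih, List.filter_cons]
    by_cases h : key a = k
    · simp [h, Function.update, add_assoc]
    · simp [h, Function.update, Ne.symm h]

theorem incremental_update_translation_sound {I K M : Type*} [DecidableEq K]
    [AddCommMonoid M] (key : I → K) (val : I → M) (L : List I) (V₀ : K → M) :
    List.foldl (fun V i => Function.update V (key i) (V (key i) + val i)) V₀ L =
      fun k =>
        if ∃ i ∈ L, key i = k then
          V₀ k + (L.filter (fun i => decide (key i = k))).foldl
              (fun a i => a + val i) 0
        else V₀ k := by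
  funext k
  rw [aux_fold]
  split_ifs with h
  · congr 1
    rw [List.sum_eq_foldl, List.foldl_map]
  · have : L.filter (fun i => decide (key i = k)) = [] := by
      rw [List.filter_eq_nil_iff]
      intro i hi
      simpa using fun hk => h ⟨i, hi, hk⟩
    simp [this]
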